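/- (Proposition 5.) The full-disclosure policy induces the highest expected emission level among all efficient disclosure policies: if d is an admissible efficient policy, then Γ(d) ≤ Γ(d_id), where d_id is the identity on E. -/

import Mathlib

open Set MeasureTheory

noncomputable section

/-- The set of belief-compatible emission levels under disclosure policy `d`,
on the emission space `E = [0, ebar]`. -/
def BCset (ebar : ℝ) (d : ℝ → ℝ) : Set ℝ :=
  {e | e ∈ Icc 0 ebar ∧ ∀ e' ∈ Icc 0 ebar, d e' = d e → e' ≤ e}

/-- `d` is more transparent than `d'`: the fibers of `d` refine those of `d'`. -/
def MoreTransparent (ebar : ℝ) (d d' : ℝ → ℝ) : Prop :=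
  ∀ e₁ ∈ Icc (0:ℝ) ebar, ∀ e₂ ∈ Icc (0:ℝ) ebar, d e₁ = d e₂ → d' e₁ = d' e₂

/-- A policy is admissible if for every type `θ ∈ Θ`, the profit `π θ ·`
attains a maximum on the belief-compatible set. -/
def Admissible (ebar θl θh : ℝ) (π : ℝ → ℝ → ℝ) (d : ℝ → ℝ) : Prop :=
  ∀ θ ∈ Icc θl θh, ∃ e ∈ BCset ebar d, ∀ e' ∈ BCset ebar d, π θ e' ≤ π θ e

/-- The maximized profit `π_d(θ)` of type `θ` under policy `d`. -/
def profitFn (ebar : ℝ) (π : ℝ → ℝ → ℝ) (d : ℝ → ℝ) (θ : ℝ) : ℝ :=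
  sSup (π θ '' BCset ebar d)

/-- The equilibrium emission `γ_d(θ)`: the least maximizer of `π θ ·` on the
belief-compatible set. -/
def emissionFn (ebar : ℝ) (π : ℝ → ℝ → ℝ) (d : ℝ → ℝ) (θ : ℝ) : ℝ :=
  sInf {e | e ∈ BCset ebar d ∧ ∀ e' ∈ BCset ebar d, π θ e' ≤ π θ e}

/-- Expected profit `Π(d) = ∫ π_d(θ) f(θ) dθ`. -/
def ExpProfit (ebar θl θh : ℝ) (π : ℝ → ℝ → ℝ) (f : ℝ → ℝ) (d : ℝ → ℝ) : ℝ :=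
  ∫ θ in Icc θl θh, profitFn ebar π d θ * f θ

/-- Expected emission `Γ(d) = ∫ γ_d(θ) f(θ) dθ`. -/
def ExpEmission (ebar θl θh : ℝ) (π : ℝ → ℝ → ℝ) (f : ℝ → ℝ) (d : ℝ → ℝ) : ℝ :=
  ∫ θ in Icc θl θh, emissionFn ebar π d θ * f θ

/-- `d` is Pareto efficient: no admissible policy yields weakly higher expected
profit and weakly lower expected emission with at least one strict. -/
def Efficient (ebar θl θh : ℝ) (π : ℝ → ℝ → ℝ) (f : ℝ → ℝ) (d : ℝ → ℝ) : Prop :=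
  ¬ ∃ d' : ℝ → ℝ, Admissible ebar θl θh π d' ∧
      ExpProfit ebar θl θh π f d ≤ ExpProfit ebar θl θh π f d' ∧
      ExpEmission ebar θl θh π f d' ≤ ExpEmission ebar θl θh π f d ∧
      (ExpProfit ebar θl θh π f d < ExpProfit ebar θl θh π f d' ∨
        ExpEmission ebar θl θh π f d' < ExpEmission ebar θl θh π f d)

/-- Proposition 5: full disclosure induces the highest expected emission
among all efficient policies. -/
theorem full_disclosure_highest_emission_among_efficient (ebar θl θh : ℝ)
    (hebar : 0 < ebar) (hθ : θl ≤ θh)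
    (π : ℝ → ℝ → ℝ)
    (hcont : ContinuousOn (fun p : ℝ × ℝ => π p.1 p.2) (Icc θl θh ×ˢ Icc 0 ebar))
    (hconc : ∀ θ ∈ Icc θl θh, StrictConcaveOn ℝ (Icc 0 ebar) (π θ))
    (hIR : ∀ θ ∈ Icc θl θh, π θ 0 < π θ ebar)
    (f : ℝ → ℝ) (hf0 : ∀ θ ∈ Icc θl θh, 0 ≤ f θ)
    (hf1 : (∫ θ in Icc θl θh, f θ) = 1)
    (hint : ∀ d : ℝ → ℝ, Admissible ebar θl θh π d →
        IntegrableOn (fun θ => profitFn ebar π d θ * f θ) (Icc θl θh) ∧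
        IntegrableOn (fun θ => emissionFn ebar π d θ * f θ) (Icc θl θh))
    (d : ℝ → ℝ) (hd : Admissible ebar θl θh π d)
    (heff : Efficient ebar θl θh π f d) :
    ExpEmission ebar θl θh π f d ≤ ExpEmission ebar θl θh π f (fun e => e) := by

  -- BCset of the identity is the whole interval
  have hBCid : BCset ebar (fun e => e) = Icc 0 ebar := by
    ext e
    constructor
    · exact fun h => h.1
    · exact fun h => ⟨h, fun e' _ heq => le_of_eq heq⟩
  have hsub : BCset ebar d ⊆ Icc 0 ebar := fun e h => h.1
  have hbc_ebar : ebar ∈ BCset ebar d :=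
    ⟨⟨hebar.le, le_rfl⟩, fun e' he' _ => he'.2⟩
  -- continuity of each section
  have hcθ : ∀ θ ∈ Icc θl θh, ContinuousOn (π θ) (Icc 0 ebar) := by
    intro θ hθm
    have : ContinuousOn (fun e : ℝ => (fun p : ℝ × ℝ => π p.1 p.2) (θ, e)) (Icc 0 ebar) :=
      hcont.comp ((continuous_const.prodMk continuous_id).continuousOn)
        (fun e he => ⟨hθm, he⟩)
    exact this
  -- identity is admissible
  have hid : Admissible ebar θl θh π (fun e => e) := by
    intro θ hθm
    obtain ⟨e, he, hmax⟩ :=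
      (isCompact_Icc).exists_isMaxOn ⟨0, ⟨le_rfl, hebar.le⟩⟩ (hcθ θ hθm)
    refine ⟨e, by rw [hBCid]; exact he, ?_⟩
    intro e' he'
    rw [hBCid] at he'
    exact hmax he'
  -- pointwise profit comparison
  have hprofit : ∀ θ ∈ Icc θl θh,
      profitFn ebar π d θ ≤ profitFn ebar π (fun e => e) θ := by
    intro θ hθm
    have hbdd : BddAbove (π θ '' Icc 0 ebar) :=
      (isCompact_Icc.image_of_continuousOn (hcθ θ hθm)).bddAbove
    have hne : (π θ '' BCset ebar d).Nonempty := ⟨π θ ebar, ⟨ebar, hbc_ebar, rfl⟩⟩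
    have : profitFn ebar π (fun e => e) θ = sSup (π θ '' Icc 0 ebar) := by
      unfold profitFn; rw [hBCid]
    rw [this]
    exact csSup_le_csSup hbdd hne (image_mono hsub)
  -- expected profit comparison
  have hPi : ExpProfit ebar θl θh π f d ≤ ExpProfit ebar θl θh π f (fun e => e) := by
    apply setIntegral_mono_on (hint d hd).1 (hint _ hid).1 measurableSet_Icc
    intro θ hθm
    exact mul_le_mul_of_nonneg_right (hprofit θ hθm) (hf0 θ hθm)
  by_contra hcon
  push_neg at hcon
  exact heff ⟨fun e => e, hid, hPi, hcon.le, Or.inr hcon⟩
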